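/- Let P be a parabolic subgroup of W, X = Fix_V(P), Q = Z_W(X^⊥), and N = N_W(P) the normalizer of P in W. Then: (a) Q is a normal subgroup of N; (b) P ∩ Q is trivial; (c) every element of P commutes with every element of Q (so the subgroup P·Q generated by P and Q is isomorphic to the direct product P × Q); and (d) there exists a subgroup D of N such that P·Q and D are complementary in N, i.e., (P·Q) ∩ D is trivial and (P·Q)·D = N. -/

import Mathlib

open scoped RealInnerProductSpace

set_option linter.unusedSectionVars false
set_option linter.unusedVariables false
set_option maxHeartbeats 1000000
open scoped Classical

variable {V : Type*} [NormedAddCommGroup V] [InnerProductSpace ℝ V] [FiniteDimensional ℝ V]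

/-- `r` is a reflection: there is a nonzero root `α` with `r α = -α` and `r` fixes
every vector orthogonal to `α`. -/
def IsReflection (r : V ≃ₗᵢ[ℝ] V) : Prop :=
  ∃ α : V, α ≠ 0 ∧ r α = -α ∧ ∀ v : V, ⟪α, v⟫ = 0 → r v = v

/-- The pointwise stabilizer in `W` of a set `s ⊆ V`. -/
def pointwiseStabilizer (W : Subgroup (V ≃ₗᵢ[ℝ] V)) (s : Set V) : Subgroup (V ≃ₗᵢ[ℝ] V) where
  carrier := {w | w ∈ W ∧ ∀ v ∈ s, w v = v}
  one_mem' := ⟨W.one_mem, fun v _ => rfl⟩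
  mul_mem' := fun {a b} ha hb => ⟨W.mul_mem ha.1 hb.1, fun v hv => by
    have h : (a * b) v = a (b v) := rfl
    rw [h, hb.2 v hv, ha.2 v hv]⟩
  inv_mem' := fun {a} ha => ⟨W.inv_mem ha.1, fun v hv => by
    show a.symm v = v
    conv_lhs => rw [← ha.2 v hv]
    exact a.symm_apply_apply v⟩

/-- The fixed-point subspace of a subgroup `U` of the isometry group of `V`. -/
def fixedSubmodule (U : Subgroup (V ≃ₗᵢ[ℝ] V)) : Submodule ℝ V where
  carrier := {v | ∀ u ∈ U, u v = v}
  zero_mem' := fun u _ => map_zero u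
  add_mem' := fun {a b} ha hb u hu => by rw [map_add, ha u hu, hb u hu]
  smul_mem' := fun c v hv u hu => by rw [map_smul, hv u hu]

namespace RG

theorem mul_app (e f : V ≃ₗᵢ[ℝ] V) (v : V) : (e * f) v = e (f v) := rfl
theorem one_app (v : V) : (1 : V ≃ₗᵢ[ℝ] V) v = v := rfl
theorem inv_app (e : V ≃ₗᵢ[ℝ] V) (v : V) : e⁻¹ v = e.symm v := rfl
theorem inv_apply_apply (e : V ≃ₗᵢ[ℝ] V) (v : V) : e⁻¹ (e v) = v := e.symm_apply_apply v
theorem apply_inv_apply (e : V ≃ₗᵢ[ℝ] V) (v : V) : e (e⁻¹ v) = v := e.apply_symm_apply v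
theorem inner_inv_left (e : V ≃ₗᵢ[ℝ] V) (x y : V) : ⟪e⁻¹ x, y⟫ = ⟪x, e y⟫ := by
  rw [← e.inner_map_map (e⁻¹ x) y, apply_inv_apply]

/-- `α` is a unit root of `r`. -/
def IsRootOf (α : V) (r : V ≃ₗᵢ[ℝ] V) : Prop :=
  ‖α‖ = 1 ∧ r α = -α ∧ ∀ u : V, ⟪α, u⟫ = 0 → r u = u

theorem IsRootOf.inner_self {α : V} {r : V ≃ₗᵢ[ℝ] V} (h : IsRootOf α r) : ⟪α, α⟫ = 1 := by
  rw [real_inner_self_eq_norm_sq, h.1]; norm_num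

theorem IsRootOf.isReflection {α : V} {r : V ≃ₗᵢ[ℝ] V} (h : IsRootOf α r) : IsReflection r :=
  ⟨α, by intro h0; rw [h0] at h; simpa using h.1, h.2.1, h.2.2⟩

theorem IsRootOf.apply {α : V} {r : V ≃ₗᵢ[ℝ] V} (h : IsRootOf α r) (x : V) :
    r x = x - (2 * ⟪α, x⟫) • α := by
  obtain ⟨h1, h2, h3⟩ := h
  have hself : ⟪α, α⟫ = 1 := by rw [real_inner_self_eq_norm_sq, h1]; norm_num
  have hperp : ⟪α, x - ⟪α, x⟫ • α⟫ = 0 := by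
    rw [inner_sub_right, real_inner_smul_right, hself]; ring
  have hdec : x = ⟪α, x⟫ • α + (x - ⟪α, x⟫ • α) := by abel
  calc r x = r (⟪α, x⟫ • α + (x - ⟪α, x⟫ • α)) := by rw [← hdec]
    _ = ⟪α, x⟫ • r α + r (x - ⟪α, x⟫ • α) := by rw [map_add, map_smul]
    _ = ⟪α, x⟫ • (-α) + (x - ⟪α, x⟫ • α) := by rw [h2, h3 _ hperp]
    _ = x - (2 * ⟪α, x⟫) • α := by module

theorem IsRootOf.eq {α : V} {r r' : V ≃ₗᵢ[ℝ] V} (h : IsRootOf α r) (h' : IsRootOf α r') :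
    r = r' := by
  ext x; rw [h.apply, h'.apply]

theorem IsRootOf.root_eq {α β : V} {r : V ≃ₗᵢ[ℝ] V} (h : IsRootOf α r) (hb : ‖β‖ = 1)
    (hrb : r β = -β) : β = α ∨ β = -α := by
  have key := h.apply β
  rw [hrb] at key
  have hb2 : β = ⟪α, β⟫ • α := by
    have h2 : (2:ℝ) • β = (2 * ⟪α, β⟫) • α := by
      linear_combination (norm := module) -key
    have := smul_right_injective V (by norm_num : (2:ℝ) ≠ 0)
      (show (2:ℝ) • β = (2:ℝ) • (⟪α, β⟫ • α) by rw [h2, mul_smul])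
    exact this
  have habs : |⟪α, β⟫| = 1 := by
    have := congrArg norm hb2
    rw [hb, norm_smul, h.1, mul_one, Real.norm_eq_abs] at this
    exact this.symm
  rcases abs_eq (by norm_num : (0:ℝ) ≤ 1) |>.mp habs with h1 | h1
  · left; rw [hb2, h1, one_smul]
  · right; rw [hb2, h1]; module

theorem IsRootOf.conj {α : V} {r : V ≃ₗᵢ[ℝ] V} (h : IsRootOf α r) (w : V ≃ₗᵢ[ℝ] V) :
    IsRootOf (w α) (w * r * w⁻¹) := by
  refine ⟨by rw [w.norm_map]; exact h.1, ?_, ?_⟩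
  · rw [mul_app, mul_app, inv_apply_apply, h.2.1, map_neg]
  · intro u hu
    rw [mul_app, mul_app]
    have : ⟪α, w⁻¹ u⟫ = 0 := by
      rw [← w.inner_map_map α (w⁻¹ u), apply_inv_apply]; exact hu
    rw [h.2.2 _ this, apply_inv_apply]

theorem IsRootOf.neg {α : V} {r : V ≃ₗᵢ[ℝ] V} (h : IsRootOf α r) : IsRootOf (-α) r := by
  refine ⟨by rw [norm_neg]; exact h.1, by rw [map_neg, h.2.1, neg_neg], ?_⟩
  intro u hu
  refine h.2.2 u ?_
  rw [← neg_eq_zero, ← inner_neg_left]; exact hu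

theorem IsRootOf.mul_self {α : V} {r : V ≃ₗᵢ[ℝ] V} (h : IsRootOf α r) : r * r = 1 := by
  ext x
  rw [mul_app, h.apply x, h.apply, inner_sub_right, real_inner_smul_right, h.inner_self, one_app]
  module

theorem IsRootOf.inv_eq {α : V} {r : V ≃ₗᵢ[ℝ] V} (h : IsRootOf α r) : r⁻¹ = r := by
  rw [← mul_eq_one_iff_inv_eq, h.mul_self]

theorem IsRootOf.inner_eq_zero {α : V} {r : V ≃ₗᵢ[ℝ] V} (h : IsRootOf α r) {x : V}
    (hx : r x = x) : ⟪α, x⟫ = 0 := by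
  have := h.apply x
  rw [hx] at this
  have h2 : (2 * ⟪α, x⟫) • α = 0 := sub_eq_self.mp this.symm
  rcases smul_eq_zero.mp h2 with h3 | h3
  · rcases mul_eq_zero.mp h3 with h4 | h4
    · norm_num at h4
    · exact h4
  · exfalso; rw [h3] at h; simpa using h.1

variable (W : Subgroup (V ≃ₗᵢ[ℝ] V))

/-- The unit roots of reflections in `W`. -/
def Roots : Set V := {α | ∃ r ∈ W, IsRootOf α r}

open Classical in
/-- The reflection in `W` with unit root `α`. -/
noncomputable def sref (α : V) : V ≃ₗᵢ[ℝ] V :=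
  if h : ∃ r ∈ W, IsRootOf α r then h.choose else 1

variable {W}

theorem sref_mem {α : V} (h : α ∈ Roots W) : sref W α ∈ W := by
  rw [sref, dif_pos (show ∃ r ∈ W, IsRootOf α r from h)]
  exact (show ∃ r ∈ W, IsRootOf α r from h).choose_spec.1

theorem sref_isRootOf {α : V} (h : α ∈ Roots W) : IsRootOf α (sref W α) := by
  rw [sref, dif_pos (show ∃ r ∈ W, IsRootOf α r from h)]
  exact (show ∃ r ∈ W, IsRootOf α r from h).choose_spec.2

theorem sref_eq_of {α : V} {r : V ≃ₗᵢ[ℝ] V} (hr : r ∈ W) (h : IsRootOf α r) :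
    sref W α = r :=
  (sref_isRootOf ⟨r, hr, h⟩).eq h

theorem sref_apply {α : V} (h : α ∈ Roots W) (x : V) :
    sref W α x = x - (2 * ⟪α, x⟫) • α :=
  (sref_isRootOf h).apply x

theorem roots_norm {α : V} (h : α ∈ Roots W) : ‖α‖ = 1 := (sref_isRootOf h).1

theorem roots_inner_self {α : V} (h : α ∈ Roots W) : ⟪α, α⟫ = 1 :=
  (sref_isRootOf h).inner_self

theorem roots_neg {α : V} (h : α ∈ Roots W) : -α ∈ Roots W :=
  ⟨sref W α, sref_mem h, (sref_isRootOf h).neg⟩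

theorem sref_neg {α : V} (h : α ∈ Roots W) : sref W (-α) = sref W α :=
  sref_eq_of (sref_mem h) (sref_isRootOf h).neg

theorem roots_smul_mem {w : V ≃ₗᵢ[ℝ] V} (hw : w ∈ W) {α : V} (h : α ∈ Roots W) :
    w α ∈ Roots W :=
  ⟨w * sref W α * w⁻¹, W.mul_mem (W.mul_mem hw (sref_mem h)) (W.inv_mem hw),
    (sref_isRootOf h).conj w⟩

theorem sref_smul {w : V ≃ₗᵢ[ℝ] V} (hw : w ∈ W) {α : V} (h : α ∈ Roots W) :
    sref W (w α) = w * sref W α * w⁻¹ :=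
  sref_eq_of (W.mul_mem (W.mul_mem hw (sref_mem h)) (W.inv_mem hw)) ((sref_isRootOf h).conj w)

theorem sref_sref {α : V} (h : α ∈ Roots W) (x : V) : sref W α (sref W α x) = x := by
  have := (sref_isRootOf h).mul_self
  calc sref W α (sref W α x) = (sref W α * sref W α) x := rfl
    _ = x := by rw [this]; rfl

theorem sref_inv {α : V} (h : α ∈ Roots W) : (sref W α)⁻¹ = sref W α :=
  (sref_isRootOf h).inv_eq

theorem sref_root_apply {α : V} (h : α ∈ Roots W) : sref W α α = -α := (sref_isRootOf h).2.1

theorem roots_finite (hWfin : (W : Set (V ≃ₗᵢ[ℝ] V)).Finite) : (Roots W).Finite := by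
  have hsub : Roots W ⊆ ⋃ r ∈ (W : Set (V ≃ₗᵢ[ℝ] V)), {α | IsRootOf α r} := by
    rintro α ⟨r, hr, h⟩
    exact Set.mem_biUnion hr h
  refine Set.Finite.subset (Set.Finite.biUnion hWfin ?_) hsub
  intro r _
  by_cases hex : ∃ α₀, IsRootOf α₀ r
  · obtain ⟨α₀, h₀⟩ := hex
    refine Set.Finite.subset ((Set.finite_singleton (-α₀)).insert α₀) ?_
    intro β hβ
    rcases h₀.root_eq hβ.1 hβ.2.1 with h | h
    · exact Set.mem_insert_iff.mpr (Or.inl h)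
    · exact Set.mem_insert_iff.mpr (Or.inr (Set.mem_singleton_iff.mpr h))
  · have : {α | IsRootOf α r} = ∅ := by
      ext β; simp only [Set.mem_setOf_eq, Set.mem_empty_iff_false, iff_false]
      exact fun hβ => hex ⟨β, hβ⟩
    rw [this]; exact Set.finite_empty

/-- Maximization lemma: moving `u` by `A` to be on the nonnegative side of all roots
of reflections in `A`, as seen from `t`. -/
theorem exists_max_shift (hWfin : (W : Set (V ≃ₗᵢ[ℝ] V)).Finite)
    (A : Subgroup (V ≃ₗᵢ[ℝ] V)) (hA : A ≤ W) (u t : V) :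
    ∃ a ∈ A, ∀ α ∈ Roots W, sref W α ∈ A → 0 ≤ ⟪α, a u⟫ * ⟪α, t⟫ := by
  have hAfin : (A : Set (V ≃ₗᵢ[ℝ] V)).Finite := hWfin.subset hA
  obtain ⟨a, ha, hmax⟩ := Set.exists_max_image (A : Set (V ≃ₗᵢ[ℝ] V))
    (fun g => ⟪g u, t⟫) hAfin ⟨1, A.one_mem⟩
  refine ⟨a, ha, fun α hα hsA => ?_⟩
  have hle := hmax (sref W α * a) (A.mul_mem hsA ha)
  rw [mul_app, sref_apply hα, inner_sub_left, real_inner_smul_left] at hle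
  nlinarith [hle]

/-- Generic point selection: a point of `U` not orthogonal to any relevant `γ ∈ Γ`. -/
theorem exists_generic (U : Submodule ℝ V) (Γ : Finset V) :
    ∃ z ∈ U, ∀ γ ∈ Γ, (∃ u ∈ U, ⟪γ, u⟫ ≠ 0) → ⟪γ, z⟫ ≠ 0 := by
  classical
  induction Γ using Finset.induction_on with
  | empty => exact ⟨0, U.zero_mem, by simp⟩
  | @insert γ₀ Γ hγ₀ ih =>
    obtain ⟨z, hzU, hz⟩ := ih
    by_cases hrel : ∃ u ∈ U, ⟪γ₀, u⟫ ≠ 0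
    · obtain ⟨u₀, hu₀U, hu₀⟩ := hrel
      obtain ⟨t, ht⟩ := Finset.exists_notMem
        ((insert γ₀ Γ).image (fun γ => -⟪γ, z⟫ / ⟪γ, u₀⟫))
      refine ⟨z + t • u₀, U.add_mem hzU (U.smul_mem t hu₀U), ?_⟩
      intro γ hγ hrelγ
      rw [inner_add_right, real_inner_smul_right]
      by_cases hc : ⟪γ, u₀⟫ = 0
      · rw [hc, mul_zero, add_zero]
        rcases Finset.mem_insert.mp hγ with h | h
        · exfalso; rw [h] at hc; exact hu₀ hc
        · exact hz γ h hrelγ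
      · intro heq
        apply ht
        refine Finset.mem_image.mpr ⟨γ, hγ, ?_⟩
        field_simp
        linarith [heq]
    · refine ⟨z, hzU, fun γ hγ hrelγ => ?_⟩
      rcases Finset.mem_insert.mp hγ with h | h
      · exact absurd hrelγ (h ▸ hrel)
      · exact hz γ h hrelγ

/-- Nonnegative combinations of a finite set of vectors. -/
def InCone (S : Finset V) (x : V) : Prop :=
  ∃ c : V → ℝ, (∀ γ, 0 ≤ c γ) ∧ x = ∑ γ ∈ S, c γ • γ

theorem inCone_mem {S : Finset V} {γ : V} (h : γ ∈ S) : InCone S γ := by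
  refine ⟨fun δ => if δ = γ then 1 else 0, fun δ => by dsimp only; split <;> norm_num, ?_⟩
  rw [Finset.sum_congr rfl (fun δ _ => by rw [ite_smul, one_smul, zero_smul])]
  rw [Finset.sum_ite_eq' S γ (fun δ => δ), if_pos h]

theorem cone_subst {S : Finset V} {δ₀ x : V} (hδ₀ : δ₀ ∈ S)
    (h1 : InCone (S.erase δ₀) δ₀) (h2 : InCone S x) : InCone (S.erase δ₀) x := by
  obtain ⟨d, hd, hdsum⟩ := h1
  obtain ⟨c, hc, hcsum⟩ := h2
  refine ⟨fun γ => c γ + c δ₀ * d γ, fun γ => by have := hc γ; have := hc δ₀; have := hd γ; positivity, ?_⟩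
  have key : ∑ γ ∈ S.erase δ₀, (c γ + c δ₀ * d γ) • γ
      = ∑ γ ∈ S.erase δ₀, c γ • γ + c δ₀ • ∑ γ ∈ S.erase δ₀, d γ • γ := by
    rw [Finset.smul_sum, ← Finset.sum_add_distrib]
    exact Finset.sum_congr rfl (fun γ _ => by rw [add_smul, smul_smul])
  simp only
  rw [key, ← hdsum, hcsum, ← Finset.sum_erase_add S _ hδ₀]

theorem exists_simple_subset (Pos : Finset V) :
    ∃ Δ : Finset V, Δ ⊆ Pos ∧ (∀ β ∈ Pos, InCone Δ β) ∧
      ∀ α ∈ Δ, ¬ InCone (Δ.erase α) α := by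
  have hex : ∃ n, ∃ Δ : Finset V, Δ ⊆ Pos ∧ (∀ β ∈ Pos, InCone Δ β) ∧ Δ.card = n :=
    ⟨Pos.card, Pos, le_refl _, fun β hβ => inCone_mem hβ, rfl⟩
  obtain ⟨Δ, hsub, hcone, hcard⟩ := Nat.find_spec hex
  refine ⟨Δ, hsub, hcone, fun α hα hIn => ?_⟩
  have hlt : (Δ.erase α).card < Nat.find hex := by
    rw [← hcard]; exact Finset.card_erase_lt_of_mem hα
  exact Nat.find_min hex hlt ⟨Δ.erase α, le_trans (Finset.erase_subset _ _) hsub,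
    fun β hβ => cone_subst hα hIn (hcone β hβ), rfl⟩

variable (W) in
/-- A positive system together with a minimal "simple system". -/
structure SimpleSys (v : V) where
  pos : Finset V
  del : Finset V
  hpos : ∀ β, β ∈ pos ↔ β ∈ Roots W ∧ 0 < ⟪β, v⟫
  hsub : del ⊆ pos
  hcone : ∀ β ∈ pos, InCone del β
  hmin : ∀ α ∈ del, ¬ InCone (del.erase α) α

theorem exists_simpleSys (hWfin : (W : Set (V ≃ₗᵢ[ℝ] V)).Finite) (v : V) :
    Nonempty (SimpleSys W v) := by
  set Pos := (roots_finite hWfin).toFinset.filter (fun β => 0 < ⟪β, v⟫) with hP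
  obtain ⟨Δ, h1, h2, h3⟩ := exists_simple_subset Pos
  refine ⟨⟨Pos, Δ, fun β => ?_, h1, h2, h3⟩⟩
  rw [hP, Finset.mem_filter, Set.Finite.mem_toFinset]

section Simple

variable {v : V} (S : SimpleSys W v)

theorem SimpleSys.pos_roots {β : V} (hβ : β ∈ S.pos) : β ∈ Roots W := ((S.hpos β).mp hβ).1
theorem SimpleSys.pos_inner {β : V} (hβ : β ∈ S.pos) : 0 < ⟪β, v⟫ := ((S.hpos β).mp hβ).2
theorem SimpleSys.del_roots {β : V} (hβ : β ∈ S.del) : β ∈ Roots W := S.pos_roots (S.hsub hβ)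
theorem SimpleSys.del_inner {β : V} (hβ : β ∈ S.del) : 0 < ⟪β, v⟫ := S.pos_inner (S.hsub hβ)

theorem support_lemma {β α : V} (hβ : β ∈ S.pos) (hα : α ∈ S.del) (hne : β ≠ α)
    {c : V → ℝ} (hc : ∀ γ, 0 ≤ c γ) (hsum : β = ∑ γ ∈ S.del, c γ • γ) :
    ∃ δ₀ ∈ S.del, δ₀ ≠ α ∧ 0 < c δ₀ := by
  by_contra hcon
  push_neg at hcon
  have hzero : ∀ γ ∈ S.del, γ ≠ α → c γ • γ = (0 : V) := by
    intro γ hγ hγα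
    have := le_antisymm (hcon γ hγ hγα) (hc γ)
    rw [this, zero_smul]
  have hβα : β = c α • α := by
    rw [hsum, Finset.sum_eq_single α (fun γ hγ hγα => hzero γ hγ hγα)
      (fun h => absurd hα h)]
  have hnorm : ‖β‖ = |c α| * ‖α‖ := by rw [hβα, norm_smul, Real.norm_eq_abs]
  rw [roots_norm (S.pos_roots hβ), roots_norm (S.del_roots hα), mul_one] at hnorm
  have : c α = 1 := by
    rcases abs_eq (by norm_num : (0:ℝ) ≤ 1) |>.mp hnorm.symm with h | h
    · exact h
    · linarith [hc α]
  exact hne (by rw [hβα, this, one_smul])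

/-- Lemma A: a simple reflection permutes the other positive roots. -/
theorem simple_perm (hv : ∀ α ∈ Roots W, ⟪α, v⟫ ≠ 0) {α β : V}
    (hα : α ∈ S.del) (hβ : β ∈ S.pos) (hne : β ≠ α) :
    sref W α β ∈ S.pos ∧ sref W α β ≠ α := by
  have hαR := S.del_roots hα
  have hβR := S.pos_roots hβ
  have hσR : sref W α β ∈ Roots W := roots_smul_mem (sref_mem hαR) hβR
  have hne' : sref W α β ≠ α := by
    intro h
    have h2 := congrArg (sref W α) h
    rw [sref_sref hαR, sref_root_apply hαR] at h2
    have h1 := S.pos_inner hβ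
    rw [h2, inner_neg_left] at h1
    linarith [S.del_inner hα]
  refine ⟨?_, hne'⟩
  rw [S.hpos]
  refine ⟨hσR, ?_⟩
  rcases lt_trichotomy (0:ℝ) ⟪sref W α β, v⟫ with h | h | h
  · exact h
  · exact absurd h.symm (hv _ hσR)
  exfalso
  have hmσ : -(sref W α β) ∈ S.pos := by
    rw [S.hpos]
    exact ⟨roots_neg hσR, by rw [inner_neg_left]; linarith⟩
  obtain ⟨c, hc, hcsum⟩ := S.hcone β hβ
  obtain ⟨d, hd, hdsum⟩ := S.hcone _ hmσ
  have hkey : ∑ γ ∈ S.del, (c γ + d γ) • γ = (2 * ⟪α, β⟫) • α := by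
    have h2 : ∑ γ ∈ S.del, (c γ + d γ) • γ
        = (∑ γ ∈ S.del, c γ • γ) + (∑ γ ∈ S.del, d γ • γ) := by
      rw [← Finset.sum_add_distrib]
      exact Finset.sum_congr rfl (fun γ _ => by rw [add_smul])
    rw [h2, ← hcsum, ← hdsum]
    rw [show -(sref W α β) = -(β - (2 * ⟪α, β⟫) • α) from by rw [sref_apply hαR]]
    module
  obtain ⟨δ₀, hδ₀, hδ₀α, hδ₀c⟩ := support_lemma S hβ hα hne hc hcsum
  have hinner : ∑ γ ∈ S.del, (c γ + d γ) * ⟪γ, v⟫ = (2 * ⟪α, β⟫) * ⟪α, v⟫ := by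
    have h3 := congrArg (fun z => ⟪z, v⟫) hkey
    simpa [sum_inner, real_inner_smul_left] using h3
  have hsplit : ∑ γ ∈ S.del.erase α, (c γ + d γ) * ⟪γ, v⟫
      = (2 * ⟪α, β⟫ - (c α + d α)) * ⟪α, v⟫ := by
    have h3 := Finset.sum_erase_add S.del (fun γ => (c γ + d γ) * ⟪γ, v⟫) hα
    have h4 : (2 * ⟪α, β⟫ - (c α + d α)) * ⟪α, v⟫
        = 2 * ⟪α, β⟫ * ⟪α, v⟫ - (c α + d α) * ⟪α, v⟫ := by ring
    rw [h4]
    linarith [h3, hinner]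
  have hpos_sum : 0 < ∑ γ ∈ S.del.erase α, (c γ + d γ) * ⟪γ, v⟫ := by
    have hmem : δ₀ ∈ S.del.erase α := Finset.mem_erase.mpr ⟨hδ₀α, hδ₀⟩
    have h1 : 0 < (c δ₀ + d δ₀) * ⟪δ₀, v⟫ :=
      mul_pos (by linarith [hd δ₀]) (S.del_inner hδ₀)
    refine lt_of_lt_of_le h1
      (Finset.single_le_sum (f := fun γ => (c γ + d γ) * ⟪γ, v⟫) (fun γ hγ => ?_) hmem)
    exact mul_nonneg (by linarith [hc γ, hd γ])
      (le_of_lt (S.del_inner (Finset.mem_of_mem_erase hγ)))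
  have htpos : 0 < 2 * ⟪α, β⟫ - (c α + d α) := by
    rw [hsplit] at hpos_sum
    nlinarith [S.del_inner hα]
  have hvec : ∑ γ ∈ S.del.erase α, (c γ + d γ) • γ
      = (2 * ⟪α, β⟫ - (c α + d α)) • α := by
    have h3 := Finset.sum_erase_add S.del (fun γ => (c γ + d γ) • γ) hα
    rw [hkey] at h3
    rw [sub_smul, eq_sub_iff_add_eq]
    exact h3
  refine S.hmin α hα ⟨fun γ => (2 * ⟪α, β⟫ - (c α + d α))⁻¹ * (c γ + d γ),
    fun γ => by have := hc γ; have := hd γ; positivity, ?_⟩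
  simp only
  have h5 : ∑ γ ∈ S.del.erase α, ((2 * ⟪α, β⟫ - (c α + d α))⁻¹ * (c γ + d γ)) • γ
      = (2 * ⟪α, β⟫ - (c α + d α))⁻¹ • ∑ γ ∈ S.del.erase α, (c γ + d γ) • γ := by
    rw [Finset.smul_sum]
    exact Finset.sum_congr rfl (fun γ _ => by rw [smul_smul])
  rw [h5, hvec, smul_smul, inv_mul_cancel₀ (ne_of_gt htpos), one_smul]

/-- Generation: every positive-root reflection lies in the group generated by the
simple reflections. -/
theorem sref_mem_closure_simple (hv : ∀ α ∈ Roots W, ⟪α, v⟫ ≠ 0) (β : V) (hβ : β ∈ S.pos) :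
    sref W β ∈ Subgroup.closure ((sref W) '' S.del) := by
  generalize hn : (S.pos.filter fun γ => ⟪γ, v⟫ < ⟪β, v⟫).card = n
  induction n using Nat.strong_induction_on generalizing β with
  | _ n ih =>
    by_cases hβΔ : β ∈ S.del
    · exact Subgroup.subset_closure (Set.mem_image_of_mem _ hβΔ)
    · -- find α ∈ del with positive inner product with β
      have hex : ∃ α ∈ S.del, 0 < ⟪α, β⟫ := by
        by_contra hcon
        push_neg at hcon
        obtain ⟨c, hc, hcsum⟩ := S.hcone β hβ
        have h1 : ⟪β, β⟫ = ∑ γ ∈ S.del, c γ * ⟪β, γ⟫ := by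
          nth_rewrite 2 [hcsum]
          rw [inner_sum]
          exact Finset.sum_congr rfl (fun γ _ => by rw [real_inner_smul_right])
        have h2 : ∑ γ ∈ S.del, c γ * ⟪β, γ⟫ ≤ 0 := by
          refine Finset.sum_nonpos (fun γ hγ => ?_)
          have h3 : ⟪β, γ⟫ ≤ 0 := by rw [real_inner_comm]; exact hcon γ hγ
          exact mul_nonpos_of_nonneg_of_nonpos (hc γ) h3
        rw [roots_inner_self (S.pos_roots hβ)] at h1
        linarith
      obtain ⟨α, hα, hαβ⟩ := hex
      have hne : β ≠ α := fun h => hβΔ (h ▸ hα)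
      have hαR := S.del_roots hα
      obtain ⟨hσpos, -⟩ := simple_perm S hv hα hβ hne
      have hσlt : ⟪sref W α β, v⟫ < ⟪β, v⟫ := by
        rw [sref_apply hαR, inner_sub_left, real_inner_smul_left]
        nlinarith [S.del_inner hα]
      have hcard : (S.pos.filter fun γ => ⟪γ, v⟫ < ⟪sref W α β, v⟫).card < n := by
        rw [← hn]
        refine Finset.card_lt_card ⟨?_, fun hsub => ?_⟩
        · intro x hx
          rw [Finset.mem_filter] at hx ⊢
          exact ⟨hx.1, lt_trans hx.2 hσlt⟩
        · have h6 := hsub (Finset.mem_filter.mpr ⟨hσpos, hσlt⟩)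
          rw [Finset.mem_filter] at h6
          exact lt_irrefl _ h6.2
      have hIH := ih _ hcard (sref W α β) hσpos rfl
      have hαmem : sref W α ∈ Subgroup.closure ((sref W) '' S.del) :=
        Subgroup.subset_closure (Set.mem_image_of_mem _ hα)
      have hconj : sref W β = sref W α * sref W (sref W α β) * (sref W α)⁻¹ := by
        have := sref_smul (sref_mem hαR) (roots_smul_mem (sref_mem hαR) (S.pos_roots hβ))
        rw [sref_sref hαR] at this
        exact this
      rw [hconj, sref_inv hαR]
      exact Subgroup.mul_mem _ (Subgroup.mul_mem _ hαmem hIH) hαmem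

theorem word_prod_mem {l : List V} (hl : ∀ γ ∈ l, γ ∈ Roots W) :
    (l.map (sref W)).prod ∈ W := by
  induction l with
  | nil => exact W.one_mem
  | cons γ t ih =>
    rw [List.map_cons, List.prod_cons]
    exact W.mul_mem (sref_mem (hl γ (List.mem_cons_self)))
      (ih (fun δ hδ => hl δ (List.mem_cons_of_mem γ hδ)))

theorem word_prod_inv {l : List V} (hl : ∀ γ ∈ l, γ ∈ Roots W) :
    ((l.map (sref W)).prod)⁻¹ = (l.reverse.map (sref W)).prod := by
  induction l with
  | nil => simp
  | cons γ t ih =>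
    rw [List.map_cons, List.prod_cons, mul_inv_rev, List.reverse_cons, List.map_append,
      List.prod_append, List.map_cons, List.map_nil, List.prod_cons, List.prod_nil,
      ih (fun δ hδ => hl δ (List.mem_cons_of_mem γ hδ)), mul_one,
      sref_inv (hl γ (List.mem_cons_self))]

theorem mem_closure_word {w : V ≃ₗᵢ[ℝ] V}
    (hw : w ∈ Subgroup.closure ((sref W) '' S.del)) :
    ∃ l : List V, (∀ γ ∈ l, γ ∈ S.del) ∧ w = (l.map (sref W)).prod := by
  induction hw using Subgroup.closure_induction with
  | mem x hx =>
    obtain ⟨γ, hγ, rfl⟩ := hx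
    exact ⟨[γ], by simpa using hγ, by simp⟩
  | one => exact ⟨[], by simp, by simp⟩
  | mul x y _ _ ihx ihy =>
    obtain ⟨l₁, h₁, rfl⟩ := ihx
    obtain ⟨l₂, h₂, rfl⟩ := ihy
    refine ⟨l₁ ++ l₂, fun γ hγ => ?_, by rw [List.map_append, List.prod_append]⟩
    rcases List.mem_append.mp hγ with h | h
    · exact h₁ γ h
    · exact h₂ γ h
  | inv x _ ihx =>
    obtain ⟨l, h₁, rfl⟩ := ihx
    refine ⟨l.reverse, fun γ hγ => h₁ γ (List.mem_reverse.mp hγ), ?_⟩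
    rw [word_prod_inv (fun γ hγ => S.del_roots (h₁ γ hγ))]

/-- Exchange-style lemma. -/
theorem exchange (hv : ∀ α ∈ Roots W, ⟪α, v⟫ ≠ 0) :
    ∀ (l : List V), (∀ γ ∈ l, γ ∈ S.del) → ∀ α ∈ S.del,
      ⟪(l.map (sref W)).prod α, v⟫ < 0 →
      ∃ l' : List V, (∀ γ ∈ l', γ ∈ S.del) ∧
        (l'.map (sref W)).prod = (l.map (sref W)).prod * sref W α ∧
        l'.length + 1 = l.length := by
  intro l
  induction l with
  | nil =>
    intro _ α hα hneg
    exfalso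
    simp only [List.map_nil, List.prod_nil, one_app] at hneg
    linarith [S.del_inner hα]
  | cons γ t ih =>
    intro hl α hα hneg
    have hγΔ : γ ∈ S.del := hl γ (List.mem_cons_self)
    have htΔ : ∀ δ ∈ t, δ ∈ S.del := fun δ hδ => hl δ (List.mem_cons_of_mem γ hδ)
    have huW : (t.map (sref W)).prod ∈ W := word_prod_mem (fun δ hδ => S.del_roots (htΔ δ hδ))
    set u := (t.map (sref W)).prod with hu
    have hprod : ((γ :: t).map (sref W)).prod = sref W γ * u := by
      rw [List.map_cons, List.prod_cons]
    have huαR : u α ∈ Roots W := roots_smul_mem huW (S.del_roots hα)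
    rcases lt_or_ge ⟪u α, v⟫ 0 with hlt | hge
    · obtain ⟨t', ht'Δ, ht'prod, ht'len⟩ := ih htΔ α hα hlt
      refine ⟨γ :: t', fun δ hδ => ?_, ?_, by simp [← ht'len]⟩
      · rcases List.mem_cons.mp hδ with h | h
        · exact h ▸ hγΔ
        · exact ht'Δ δ h
      · rw [List.map_cons, List.prod_cons, ht'prod, hprod, mul_assoc]
    · -- u α is a positive root sent negative by sref γ, so u α = γ
      have huαpos : u α ∈ S.pos := by
        rw [S.hpos]
        refine ⟨huαR, lt_of_le_of_ne hge (fun h => hv _ huαR h.symm)⟩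
      have huαγ : u α = γ := by
        by_contra hne
        obtain ⟨hσpos, -⟩ := simple_perm S hv hγΔ huαpos hne
        have := S.pos_inner hσpos
        rw [hprod, mul_app] at hneg
        linarith
      have hconj : sref W γ = u * sref W α * u⁻¹ := by
        rw [← huαγ, sref_smul huW (S.del_roots hα)]
      refine ⟨t, htΔ, ?_, by simp⟩
      rw [hprod, hconj]
      have hself := (sref_isRootOf (S.del_roots hα)).mul_self
      have hrw : ((u * sref W α * u⁻¹) * u) * sref W α = u * (sref W α * sref W α) := by
        group
      rw [hrw, hself, mul_one]

/-- Every reflection in `W` has a unit root. -/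
theorem reflection_unit_root {r : V ≃ₗᵢ[ℝ] V} (hr : r ∈ W) (hrefl : IsReflection r) :
    ∃ α ∈ Roots W, sref W α = r := by
  obtain ⟨a, ha0, har, hafix⟩ := hrefl
  have hroot : IsRootOf (‖a‖⁻¹ • a) r := by
    refine ⟨?_, ?_, ?_⟩
    · rw [norm_smul, norm_inv, norm_norm, inv_mul_cancel₀ (norm_ne_zero_iff.mpr ha0)]
    · rw [map_smul, har, smul_neg]
    · intro u hu
      refine hafix u ?_
      rw [real_inner_smul_left] at hu
      rcases mul_eq_zero.mp hu with h | h
      · exact absurd (inv_eq_zero.mp h) (norm_ne_zero_iff.mpr ha0).elim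
      · exact h
  exact ⟨‖a‖⁻¹ • a, ⟨r, hr, hroot⟩, sref_eq_of hr hroot⟩

theorem W_le_closure_simple (hv : ∀ α ∈ Roots W, ⟪α, v⟫ ≠ 0)
    (hWgen : W = Subgroup.closure {r : V ≃ₗᵢ[ℝ] V | r ∈ W ∧ IsReflection r}) :
    ∀ w ∈ W, w ∈ Subgroup.closure ((sref W) '' S.del) := by
  intro w hw
  have hw' : w ∈ Subgroup.closure {r : V ≃ₗᵢ[ℝ] V | r ∈ W ∧ IsReflection r} := hWgen ▸ hw
  refine Subgroup.closure_le _ |>.mpr ?_ hw'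
  rintro r ⟨hrW, hrefl⟩
  obtain ⟨α, hαR, hsα⟩ := reflection_unit_root hrW hrefl
  have hv' := hv α hαR
  rcases lt_or_gt_of_ne hv' with h | h
  · have hmα : -α ∈ S.pos := by
      rw [S.hpos]
      exact ⟨roots_neg hαR, by rw [inner_neg_left]; linarith⟩
    have := sref_mem_closure_simple S hv (-α) hmα
    rw [sref_neg hαR, hsα] at this
    exact this
  · have hαpos : α ∈ S.pos := (S.hpos α).mpr ⟨hαR, h⟩
    have := sref_mem_closure_simple S hv α hαpos
    rw [hsα] at this
    exact this

/-- A nontrivial element of `W` sends some simple root to a negative root. -/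
theorem exists_simple_neg (hv : ∀ α ∈ Roots W, ⟪α, v⟫ ≠ 0)
    (hWgen : W = Subgroup.closure {r : V ≃ₗᵢ[ℝ] V | r ∈ W ∧ IsReflection r})
    {w : V ≃ₗᵢ[ℝ] V} (hw : w ∈ W) (hne : w ≠ 1) :
    ∃ α ∈ S.del, ⟪w α, v⟫ < 0 := by
  by_contra hcon
  push_neg at hcon
  have hex : ∃ n, ∃ l : List V, (∀ γ ∈ l, γ ∈ S.del) ∧ w = (l.map (sref W)).prod ∧
      l.length = n := by
    obtain ⟨l, h1, h2⟩ := mem_closure_word S (W_le_closure_simple S hv hWgen w hw)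
    exact ⟨l.length, l, h1, h2, rfl⟩
  obtain ⟨l, hlΔ, hlprod, hllen⟩ := Nat.find_spec hex
  rcases List.eq_nil_or_concat l with rfl | ⟨t, α, rfl⟩
  · exact hne (by simpa using hlprod)
  · have htΔ : ∀ δ ∈ t, δ ∈ S.del := fun δ hδ =>
      hlΔ δ (by rw [List.concat_eq_append]; exact List.mem_append_left _ hδ)
    have hαΔ : α ∈ S.del := hlΔ α (by rw [List.concat_eq_append]; simp)
    have hαR := S.del_roots hαΔ
    have hprodsplit : w = (t.map (sref W)).prod * sref W α := by
      rw [hlprod, List.concat_eq_append, List.map_append, List.prod_append]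
      simp
    set u := (t.map (sref W)).prod with hu
    have huα : u α = -(w α) := by
      have h7 : w α = (u * sref W α) α := by rw [← hprodsplit]
      rw [mul_app, sref_root_apply hαR, map_neg] at h7
      rw [h7, neg_neg]
    have huαneg : ⟪u α, v⟫ < 0 := by
      rw [huα, inner_neg_left]
      have h1 := hcon α hαΔ
      have h2 : w α ∈ Roots W := roots_smul_mem hw hαR
      have := hv _ h2
      rcases lt_or_eq_of_le h1 with h | h
      · linarith
      · exact absurd h.symm this
    obtain ⟨t', ht'Δ, ht'prod, ht'len⟩ := exchange S hv t htΔ α hαΔ huαneg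
    have hwt' : w = (t'.map (sref W)).prod := by rw [ht'prod, ← hu, ← hprodsplit]
    have hlen : t'.length < Nat.find hex := by
      rw [← hllen, List.concat_eq_append, List.length_append]
      simp only [List.length_cons, List.length_nil]
      omega
    exact Nat.find_min hex hlen ⟨t', ht'Δ, hwt', rfl⟩

/-- Counting lemma: multiplying by a simple reflection sent negative decreases the
inversion count. -/
theorem count_lt (hv : ∀ α ∈ Roots W, ⟪α, v⟫ ≠ 0) {w : V ≃ₗᵢ[ℝ] V} (hw : w ∈ W)
    {α : V} (hα : α ∈ S.del) (hneg : ⟪w α, v⟫ < 0) :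
    (S.pos.filter fun β => ⟪(w * sref W α) β, v⟫ < 0).card
      < (S.pos.filter fun β => ⟪w β, v⟫ < 0).card := by
  have hαR := S.del_roots hα
  have hsub : (S.pos.filter fun β => ⟪(w * sref W α) β, v⟫ < 0)
      ⊆ ((S.pos.filter fun β => ⟪w β, v⟫ < 0).erase α).image (sref W α) := by
    intro β hβ
    rw [Finset.mem_filter] at hβ
    obtain ⟨hβpos, hβneg⟩ := hβ
    rw [mul_app] at hβneg
    have hβα : β ≠ α := by
      intro h
      rw [h, sref_root_apply hαR, map_neg, inner_neg_left] at hβneg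
      linarith [hneg]
    obtain ⟨hσpos, hσα⟩ := simple_perm S hv hα hβpos hβα
    have hmem : sref W α β ∈ (S.pos.filter fun β => ⟪w β, v⟫ < 0).erase α :=
      Finset.mem_erase.mpr ⟨hσα, Finset.mem_filter.mpr ⟨hσpos, hβneg⟩⟩
    exact Finset.mem_image.mpr ⟨sref W α β, hmem, sref_sref hαR β⟩
  have hαmem : α ∈ S.pos.filter fun β => ⟪w β, v⟫ < 0 :=
    Finset.mem_filter.mpr ⟨S.hsub hα, hneg⟩
  calc (S.pos.filter fun β => ⟪(w * sref W α) β, v⟫ < 0).card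
      ≤ (((S.pos.filter fun β => ⟪w β, v⟫ < 0).erase α).image (sref W α)).card :=
        Finset.card_le_card hsub
    _ ≤ ((S.pos.filter fun β => ⟪w β, v⟫ < 0).erase α).card := Finset.card_image_le
    _ < (S.pos.filter fun β => ⟪w β, v⟫ < 0).card :=
        Finset.card_erase_lt_of_mem hαmem

/-- Core stabilizer theorem, for a point on the nonnegative side of all positive roots. -/
theorem stab_core (hv : ∀ α ∈ Roots W, ⟪α, v⟫ ≠ 0)
    (hWgen : W = Subgroup.closure {r : V ≃ₗᵢ[ℝ] V | r ∈ W ∧ IsReflection r})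
    {x : V} (hx : ∀ β ∈ S.pos, 0 ≤ ⟪β, x⟫) {w : V ≃ₗᵢ[ℝ] V} (hw : w ∈ W) (hwx : w x = x) :
    w ∈ Subgroup.closure {r : V ≃ₗᵢ[ℝ] V | r ∈ W ∧ IsReflection r ∧ r x = x} := by
  generalize hn : (S.pos.filter fun β => ⟪w β, v⟫ < 0).card = n
  induction n using Nat.strong_induction_on generalizing w with
  | _ n ih =>
    by_cases hne : w = 1
    · rw [hne]; exact Subgroup.one_mem _
    obtain ⟨α, hα, hαneg⟩ := exists_simple_neg S hv hWgen hw hne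
    have hαR := S.del_roots hα
    have hαx : ⟪α, x⟫ = 0 := by
      have h1 : 0 ≤ ⟪α, x⟫ := hx α (S.hsub hα)
      have h2 : ⟪α, x⟫ = ⟪w α, x⟫ := by
        conv_rhs => rw [← hwx]
        exact (w.inner_map_map α x).symm
      have h3 : -(w α) ∈ S.pos := by
        rw [S.hpos]
        exact ⟨roots_neg (roots_smul_mem hw hαR), by rw [inner_neg_left]; linarith⟩
      have h4 := hx _ h3
      rw [inner_neg_left] at h4
      linarith
    have hsx : sref W α x = x := by
      rw [sref_apply hαR, hαx, mul_zero, zero_smul, sub_zero]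
    have hw'x : (w * sref W α) x = x := by rw [mul_app, hsx, hwx]
    have hw'W : w * sref W α ∈ W := W.mul_mem hw (sref_mem hαR)
    have hcard := count_lt S hv hw hα hαneg
    rw [hn] at hcard
    have hIH := ih _ hcard hw'W hw'x rfl
    have hsmem : sref W α ∈ Subgroup.closure
        {r : V ≃ₗᵢ[ℝ] V | r ∈ W ∧ IsReflection r ∧ r x = x} :=
      Subgroup.subset_closure ⟨sref_mem hαR, (sref_isRootOf hαR).isReflection, hsx⟩
    have : w = (w * sref W α) * sref W α := by
      rw [mul_assoc, (sref_isRootOf hαR).mul_self, mul_one]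
    rw [this]
    exact Subgroup.mul_mem _ hIH hsmem

end Simple

theorem isReflection_conj {r : V ≃ₗᵢ[ℝ] V} (h : IsReflection r) (u : V ≃ₗᵢ[ℝ] V) :
    IsReflection (u * r * u⁻¹) := by
  obtain ⟨a, ha0, har, hfix⟩ := h
  refine ⟨u a, fun h0 => ha0 (by simpa using congrArg u.symm h0), ?_, ?_⟩
  · rw [mul_app, mul_app, inv_apply_apply, har, map_neg]
  · intro x hx
    rw [mul_app, mul_app]
    have : ⟪a, u⁻¹ x⟫ = 0 := by
      rw [← u.inner_map_map a (u⁻¹ x), apply_inv_apply]; exact hx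
    rw [hfix _ this, apply_inv_apply]

/-- Stabilizer of a point is generated by the reflections fixing it. -/
theorem stabilizer_point (hWfin : (W : Set (V ≃ₗᵢ[ℝ] V)).Finite)
    (hWgen : W = Subgroup.closure {r : V ≃ₗᵢ[ℝ] V | r ∈ W ∧ IsReflection r})
    (x : V) {w : V ≃ₗᵢ[ℝ] V} (hw : w ∈ W) (hwx : w x = x) :
    w ∈ Subgroup.closure {r : V ≃ₗᵢ[ℝ] V | r ∈ W ∧ IsReflection r ∧ r x = x} := by
  obtain ⟨v, -, hvgen⟩ := exists_generic (⊤ : Submodule ℝ V) (roots_finite hWfin).toFinset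
  have hv : ∀ α ∈ Roots W, ⟪α, v⟫ ≠ 0 := by
    intro α hα
    refine hvgen α ((roots_finite hWfin).mem_toFinset.mpr hα) ⟨α, Submodule.mem_top, ?_⟩
    rw [roots_inner_self hα]; norm_num
  obtain ⟨S⟩ := exists_simpleSys hWfin v
  obtain ⟨g, hgW, hgmax⟩ := exists_max_shift hWfin W le_rfl x v
  have hgx : ∀ β ∈ S.pos, 0 ≤ ⟪β, g x⟫ := by
    intro β hβ
    have h1 := hgmax β (S.pos_roots hβ) (sref_mem (S.pos_roots hβ))
    have h2 := S.pos_inner hβ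
    nlinarith [h1, h2]
  have hgwW : g * w * g⁻¹ ∈ W := W.mul_mem (W.mul_mem hgW hw) (W.inv_mem hgW)
  have hgwx : (g * w * g⁻¹) (g x) = g x := by
    rw [mul_app, mul_app, inv_apply_apply, hwx]
  have hcore := stab_core S hv hWgen hgx hgwW hgwx
  have hmap := Subgroup.mem_map_of_mem ((MulAut.conj g⁻¹).toMonoidHom : (V ≃ₗᵢ[ℝ] V) →* (V ≃ₗᵢ[ℝ] V)) hcore
  rw [MonoidHom.map_closure] at hmap
  have heq : ((MulAut.conj g⁻¹).toMonoidHom : (V ≃ₗᵢ[ℝ] V) →* (V ≃ₗᵢ[ℝ] V)) (g * w * g⁻¹) = w := by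
    simp only [MulEquiv.coe_toMonoidHom, MulAut.conj_apply]
    group
  rw [heq] at hmap
  refine Subgroup.closure_mono ?_ hmap
  rintro y ⟨r, ⟨hrW, hrefl, hrfix⟩, rfl⟩
  simp only [MulEquiv.coe_toMonoidHom, MulAut.conj_apply, inv_inv]
  refine ⟨W.mul_mem (W.mul_mem (W.inv_mem hgW) hrW) hgW, ?_, ?_⟩
  · have := isReflection_conj hrefl g⁻¹
    rwa [inv_inv] at this
  · rw [mul_app, mul_app, hrfix, inv_apply_apply]

/-- Stabilizer of a subspace is generated by the reflections fixing it pointwise. -/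
theorem stabilizer_subspace (hWfin : (W : Set (V ≃ₗᵢ[ℝ] V)).Finite)
    (hWgen : W = Subgroup.closure {r : V ≃ₗᵢ[ℝ] V | r ∈ W ∧ IsReflection r})
    (U : Submodule ℝ V) {w : V ≃ₗᵢ[ℝ] V} (hw : w ∈ W) (hwU : ∀ u ∈ U, w u = u) :
    w ∈ Subgroup.closure {r : V ≃ₗᵢ[ℝ] V | r ∈ W ∧ IsReflection r ∧ ∀ u ∈ U, r u = u} := by
  obtain ⟨z, hzU, hz⟩ := exists_generic U (roots_finite hWfin).toFinset
  have hcore := stabilizer_point hWfin hWgen z hw (hwU z hzU)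
  refine Subgroup.closure_mono ?_ hcore
  rintro r ⟨hrW, hrefl, hrz⟩
  obtain ⟨α, hαR, hsα⟩ := reflection_unit_root hrW hrefl
  have hroot : IsRootOf α r := hsα ▸ sref_isRootOf hαR
  have hαz : ⟪α, z⟫ = 0 := hroot.inner_eq_zero hrz
  have hperp : ∀ u ∈ U, ⟪α, u⟫ = 0 := by
    intro u hu
    by_contra hne
    exact hz α ((roots_finite hWfin).mem_toFinset.mpr hαR) ⟨u, hu, hne⟩ hαz
  exact ⟨hrW, hrefl, fun u hu => hroot.2.2 u (hperp u hu)⟩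

theorem sign_trans {a b c : ℝ} (h1 : 0 < a * b) (h2 : 0 < b * c) : 0 < a * c := by
  rcases lt_trichotomy b 0 with hb | hb | hb
  · exact mul_pos_of_neg_of_neg (by nlinarith) (by nlinarith)
  · rw [hb, mul_zero] at h1; linarith
  · exact mul_pos (by nlinarith) (by nlinarith)

/-- If `g ∈ W` fixes a subspace `Y` pointwise together with a point `c` not orthogonal
to any root outside `Yᗮ`'s orthogonal... then `g = 1`. -/
theorem free_aux (hWfin : (W : Set (V ≃ₗᵢ[ℝ] V)).Finite)
    (hWgen : W = Subgroup.closure {r : V ≃ₗᵢ[ℝ] V | r ∈ W ∧ IsReflection r})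
    (Y : Submodule ℝ V) {g : V ≃ₗᵢ[ℝ] V} (hg : g ∈ W)
    (hgY : ∀ u ∈ Y, g u = u) (c : V) (hgc : g c = c)
    (hc : ∀ γ, γ ∈ Roots W → γ ∈ Yᗮ → ⟪γ, c⟫ ≠ 0) : g = 1 := by
  have hfix : ∀ u ∈ Y ⊔ (Submodule.span ℝ {c}), g u = u := by
    intro u hu
    obtain ⟨a, ha, b, hb, rfl⟩ := Submodule.mem_sup.mp hu
    obtain ⟨t, rfl⟩ := Submodule.mem_span_singleton.mp hb
    rw [map_add, map_smul, hgc, hgY a ha]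
  have hmem := stabilizer_subspace hWfin hWgen (Y ⊔ Submodule.span ℝ {c}) hg hfix
  have hempty : {r : V ≃ₗᵢ[ℝ] V | r ∈ W ∧ IsReflection r ∧
      ∀ u ∈ Y ⊔ Submodule.span ℝ {c}, r u = u} ⊆ (↑(⊥ : Subgroup (V ≃ₗᵢ[ℝ] V)) : Set _) := by
    rintro r ⟨hrW, hrefl, hrfix⟩
    exfalso
    obtain ⟨α, hαR, hsα⟩ := reflection_unit_root hrW hrefl
    have hroot : IsRootOf α r := hsα ▸ sref_isRootOf hαR
    have hαY : α ∈ Yᗮ := by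
      rw [Submodule.mem_orthogonal]
      intro u hu
      have : r u = u := hrfix u (Submodule.mem_sup_left hu)
      have := hroot.inner_eq_zero this
      rwa [real_inner_comm] at this
    have hrc : r c = c := hrfix c (Submodule.mem_sup_right (Submodule.mem_span_singleton_self c))
    exact hc α hαR hαY (hroot.inner_eq_zero hrc)
  have : g ∈ (⊥ : Subgroup (V ≃ₗᵢ[ℝ] V)) := by
    have h2 := (Subgroup.closure_le _).mpr hempty
    exact h2 hmem
  exact Subgroup.mem_bot.mp this

/-- Freeness: an element of `W` fixing `Y` pointwise and moving a regular point within
its chamber is trivial. -/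
theorem kill_aux (hWfin : (W : Set (V ≃ₗᵢ[ℝ] V)).Finite)
    (hWgen : W = Subgroup.closure {r : V ≃ₗᵢ[ℝ] V | r ∈ W ∧ IsReflection r})
    (Y : Submodule ℝ V) {g : V ≃ₗᵢ[ℝ] V} (hgW : g ∈ W)
    (hgY : ∀ u ∈ Y, g u = u) (x₀ : V)
    (hreg : ∀ γ, γ ∈ Roots W → γ ∈ Yᗮ → ⟪γ, x₀⟫ ≠ 0)
    (hgroots : ∀ γ, γ ∈ Roots W → γ ∈ Yᗮ → (g⁻¹ γ ∈ Roots W ∧ g⁻¹ γ ∈ Yᗮ))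
    (hsim : ∀ γ, γ ∈ Roots W → γ ∈ Yᗮ → 0 < ⟪γ, g x₀⟫ * ⟪γ, x₀⟫) : g = 1 := by
  -- iterate
  have hiter : ∀ i : ℕ, ∀ γ, γ ∈ Roots W → γ ∈ Yᗮ → 0 < ⟪γ, (g ^ i) x₀⟫ * ⟪γ, x₀⟫ := by
    intro i
    induction i with
    | zero =>
      intro γ h1 h2
      rw [pow_zero, one_app]
      exact mul_self_pos.mpr (hreg γ h1 h2)
    | succ i ih =>
      intro γ h1 h2
      obtain ⟨h1', h2'⟩ := hgroots γ h1 h2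
      have hstep : ⟪γ, (g ^ (i+1)) x₀⟫ = ⟪g⁻¹ γ, (g ^ i) x₀⟫ := by
        rw [inner_inv_left]
        congr 1
        rw [← mul_app g (g ^ i) x₀, ← pow_succ']
      have hA := ih (g⁻¹ γ) h1' h2'
      have hB : 0 < ⟪g⁻¹ γ, x₀⟫ * ⟪γ, x₀⟫ := by
        have := hsim γ h1 h2
        rwa [show ⟪γ, g x₀⟫ = ⟪g⁻¹ γ, x₀⟫ from (inner_inv_left g γ x₀).symm] at this
      rw [hstep]
      exact sign_trans hA hB
  -- finite order
  have hfinW : Finite ↥(W : Set (V ≃ₗᵢ[ℝ] V)) := hWfin.to_subtype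
  obtain ⟨i, j, hij, hfij⟩ := Finite.exists_ne_map_eq_of_infinite
    (fun i : ℕ => (⟨g ^ i, W.pow_mem hgW i⟩ : ↥(W : Set (V ≃ₗᵢ[ℝ] V))))
  wlog hlt : i < j generalizing i j
  · exact this j i hij.symm (by rw [hfij]) (by omega)
  have hpow0 : g ^ (j - i) = 1 := by
    have h1 : g ^ i = g ^ j := congrArg Subtype.val hfij
    have h2 : g ^ (j - i) * g ^ i = g ^ j := by
      rw [← pow_add]; congr 1; omega
    rw [← h1] at h2
    exact mul_right_cancel (by rw [h2, one_mul])
  obtain ⟨k, hkpos, hpow⟩ : ∃ k, 0 < k ∧ g ^ k = 1 := ⟨j - i, by omega, hpow0⟩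
  -- averaged point
  set c := ∑ m ∈ Finset.range k, (g ^ m) x₀ with hc
  have hgc : g c = c := by
    rw [hc, map_sum]
    have h3 : ∀ m, g ((g ^ m) x₀) = (g ^ (m + 1)) x₀ := by
      intro m
      rw [← mul_app g (g ^ m) x₀, ← pow_succ']
    rw [Finset.sum_congr rfl (fun m _ => h3 m)]
    obtain ⟨k', rfl⟩ : ∃ k', k = k' + 1 := ⟨k - 1, by omega⟩
    have h4 : (g ^ (k' + 1)) x₀ = (g ^ 0) x₀ := by rw [hpow, pow_zero]
    rw [Finset.sum_range_succ, Finset.sum_range_succ', h4]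
  have hcreg : ∀ γ, γ ∈ Roots W → γ ∈ Yᗮ → ⟪γ, c⟫ ≠ 0 := by
    intro γ h1 h2
    have hpos : 0 < ⟪γ, c⟫ * ⟪γ, x₀⟫ := by
      have h5 : ⟪γ, c⟫ * ⟪γ, x₀⟫ = ∑ m ∈ Finset.range k, ⟪γ, (g ^ m) x₀⟫ * ⟪γ, x₀⟫ := by
        rw [hc, inner_sum, Finset.sum_mul]
      rw [h5]
      refine Finset.sum_pos (fun m _ => hiter m γ h1 h2) ?_
      exact Finset.nonempty_range_iff.mpr (by omega)
    intro h0
    rw [h0, zero_mul] at hpos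
    exact lt_irrefl _ hpos
  exact free_aux hWfin hWgen Y hgW hgY c hgc hcreg

end RG

theorem mem_pointwiseStabilizer_iff {W : Subgroup (V ≃ₗᵢ[ℝ] V)} {s : Set V}
    {g : V ≃ₗᵢ[ℝ] V} : g ∈ pointwiseStabilizer W s ↔ g ∈ W ∧ ∀ v ∈ s, g v = v := Iff.rfl

theorem mem_fixedSubmodule_iff {U : Subgroup (V ≃ₗᵢ[ℝ] V)} {v : V} :
    v ∈ fixedSubmodule U ↔ ∀ u ∈ U, u v = v := Iff.rfl

open RG in
/-- Structure of the normalizer `N = N_W(P)` of a parabolic subgroup `P`: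
`Q = Z_W(Xᗮ)` is normal in `N`, `P ⊓ Q` is trivial, `P` and `Q` commute elementwise
(so `P ⊔ Q ≅ P × Q`), and `P ⊔ Q` has a complement `D` in `N`. -/
theorem normalizer_decomposition
    (W : Subgroup (V ≃ₗᵢ[ℝ] V))
    (hWfin : (W : Set (V ≃ₗᵢ[ℝ] V)).Finite)
    (hWgen : W = Subgroup.closure {r : V ≃ₗᵢ[ℝ] V | r ∈ W ∧ IsReflection r})
    (P : Subgroup (V ≃ₗᵢ[ℝ] V)) (X₀ : Submodule ℝ V)
    (hP : P = pointwiseStabilizer W (X₀ : Set V))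
    (X : Submodule ℝ V) (hX : X = fixedSubmodule P)
    (Q : Subgroup (V ≃ₗᵢ[ℝ] V)) (hQ : Q = pointwiseStabilizer W ((Xᗮ : Submodule ℝ V) : Set V))
    (N : Subgroup (V ≃ₗᵢ[ℝ] V)) (hN : N = W ⊓ Subgroup.normalizer (P : Set (V ≃ₗᵢ[ℝ] V))) :
    (Q ≤ N ∧ ∀ n ∈ N, ∀ q ∈ Q, n * q * n⁻¹ ∈ Q) ∧
    P ⊓ Q = ⊥ ∧
    (∀ p ∈ P, ∀ q ∈ Q, p * q = q * p) ∧
    ∃ D : Subgroup (V ≃ₗᵢ[ℝ] V), D ≤ N ∧ (P ⊔ Q) ⊓ D = ⊥ ∧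
      ∀ n ∈ N, ∃ x ∈ P ⊔ Q, ∃ d ∈ D, n = x * d := by
  classical
  have hPW : P ≤ W := by
    intro p hp; rw [hP, mem_pointwiseStabilizer_iff] at hp; exact hp.1
  have hQW : Q ≤ W := by
    intro q hq; rw [hQ, mem_pointwiseStabilizer_iff] at hq; exact hq.1
  have hPX : ∀ p ∈ P, ∀ x ∈ X, p x = x := by
    intro p hp x hx
    rw [hX, mem_fixedSubmodule_iff] at hx
    exact hx p hp
  have hQXp : ∀ q ∈ Q, ∀ y ∈ Xᗮ, q y = y := by
    intro q hq y hy
    rw [hQ, mem_pointwiseStabilizer_iff] at hq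
    exact hq.2 y hy
  have hXdd : Xᗮᗮ = X := Submodule.orthogonal_orthogonal X
  have hPperp : ∀ p ∈ P, ∀ y ∈ Xᗮ, p y ∈ Xᗮ := by
    intro p hp y hy
    rw [Submodule.mem_orthogonal]
    intro u hu
    calc ⟪u, p y⟫ = ⟪p u, p y⟫ := by rw [hPX p hp u hu]
      _ = ⟪u, y⟫ := p.inner_map_map u y
      _ = 0 := (Submodule.mem_orthogonal X y).mp hy u hu
  have hQX : ∀ q ∈ Q, ∀ x ∈ X, q x ∈ X := by
    intro q hq x hx
    rw [← hXdd, Submodule.mem_orthogonal]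
    intro y hy
    calc ⟪y, q x⟫ = ⟪q y, q x⟫ := by rw [hQXp q hq y hy]
      _ = ⟪y, x⟫ := q.inner_map_map y x
      _ = 0 := by rw [real_inner_comm]; exact (Submodule.mem_orthogonal X y).mp hy x hx
  have hdec : ∀ z : V, ∃ x ∈ X, ∃ y ∈ Xᗮ, z = x + y := by
    intro z
    have htop : X ⊔ Xᗮ = ⊤ := Submodule.sup_orthogonal_of_hasOrthogonalProjection
    have hz : z ∈ X ⊔ Xᗮ := by rw [htop]; exact Submodule.mem_top
    obtain ⟨x, hx, y, hy, hxy⟩ := Submodule.mem_sup.mp hz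
    exact ⟨x, hx, y, hy, hxy.symm⟩
  have hcomm : ∀ p ∈ P, ∀ q ∈ Q, p * q = q * p := by
    intro p hp q hq
    ext z
    obtain ⟨x, hx, y, hy, rfl⟩ := hdec z
    have h1 : (p * q) (x + y) = q x + p y := by
      rw [mul_app, map_add, hQXp q hq y hy, map_add, hPX p hp (q x) (hQX q hq x hx)]
    have h2 : (q * p) (x + y) = q x + p y := by
      rw [mul_app, map_add, hPX p hp x hx, map_add, hQXp q hq (p y) (hPperp p hp y hy)]
    rw [h1, h2]
  have hPQbot : P ⊓ Q = ⊥ := by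
    refine le_antisymm (fun g hg => ?_) bot_le
    rw [Subgroup.mem_inf] at hg
    rw [Subgroup.mem_bot]
    ext z
    obtain ⟨x, hx, y, hy, rfl⟩ := hdec z
    rw [map_add, hPX g hg.1 x hx, hQXp g hg.2 y hy, one_app]
  have hNW : N ≤ W := by rw [hN]; exact inf_le_left
  have hNnorm : ∀ n ∈ N, ∀ g : V ≃ₗᵢ[ℝ] V, g ∈ P ↔ n * g * n⁻¹ ∈ P := by
    intro n hn
    rw [hN] at hn
    exact Subgroup.mem_normalizer_iff.mp hn.2
  have hNX : ∀ n ∈ N, ∀ x ∈ X, n x ∈ X := by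
    intro n hn x hx
    rw [hX, mem_fixedSubmodule_iff]
    intro p hp
    have hg : n⁻¹ * p * n ∈ P := by
      refine (hNnorm n hn (n⁻¹ * p * n)).mpr ?_
      rw [show n * (n⁻¹ * p * n) * n⁻¹ = p from by group]
      exact hp
    have hpn : p * n = n * (n⁻¹ * p * n) := by group
    calc p (n x) = (p * n) x := rfl
      _ = (n * (n⁻¹ * p * n)) x := by rw [hpn]
      _ = n ((n⁻¹ * p * n) x) := rfl
      _ = n x := by rw [hPX _ hg x hx]
  have hNXp : ∀ n ∈ N, ∀ y ∈ Xᗮ, n y ∈ Xᗮ := by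
    intro n hn y hy
    rw [Submodule.mem_orthogonal]
    intro u hu
    have h1 : n⁻¹ u ∈ X := hNX n⁻¹ (N.inv_mem hn) u hu
    calc ⟪u, n y⟫ = ⟪n (n⁻¹ u), n y⟫ := by rw [apply_inv_apply]
      _ = ⟪n⁻¹ u, y⟫ := n.inner_map_map _ _
      _ = 0 := (Submodule.mem_orthogonal X y).mp hy _ h1
  have hQN : Q ≤ N := by
    intro q hq
    rw [hN, Subgroup.mem_inf]
    refine ⟨hQW hq, Subgroup.mem_normalizer_iff.mpr (fun g => ⟨fun hg => ?_, fun hg => ?_⟩)⟩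
    · rw [← hcomm g hg q hq, mul_assoc, mul_inv_cancel, mul_one]
      exact hg
    · have h2 : q⁻¹ * (q * g * q⁻¹) * q = g := by group
      have h3 := hcomm _ hg q⁻¹ (Q.inv_mem hq)
      rw [← h2, ← h3, mul_assoc, inv_mul_cancel, mul_one]
      exact hg
  have hPN : P ≤ N := by
    intro x hx
    rw [hN, Subgroup.mem_inf]
    exact ⟨hPW hx, Subgroup.le_normalizer hx⟩
  have hNQ : ∀ n ∈ N, ∀ q ∈ Q, n * q * n⁻¹ ∈ Q := by
    intro n hn q hq
    rw [hQ, mem_pointwiseStabilizer_iff]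
    refine ⟨W.mul_mem (W.mul_mem (hNW hn) (hQW hq)) (W.inv_mem (hNW hn)), fun y hy => ?_⟩
    have h1 : n⁻¹ y ∈ Xᗮ := hNXp n⁻¹ (N.inv_mem hn) y hy
    calc (n * q * n⁻¹) y = n (q (n⁻¹ y)) := rfl
      _ = n (n⁻¹ y) := by rw [hQXp q hq _ h1]
      _ = y := apply_inv_apply n y
  -- roots membership transfer
  have hNRQ : ∀ n ∈ N, ∀ γ, γ ∈ Roots W → γ ∈ X → (n γ ∈ Roots W ∧ n γ ∈ X) :=
    fun n hn γ h1 h2 => ⟨roots_smul_mem (hNW hn) h1, hNX n hn γ h2⟩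
  have hNRP : ∀ n ∈ N, ∀ γ, γ ∈ Roots W → γ ∈ Xᗮ → (n γ ∈ Roots W ∧ n γ ∈ Xᗮ) :=
    fun n hn γ h1 h2 => ⟨roots_smul_mem (hNW hn) h1, hNXp n hn γ h2⟩
  have hsrefQ : ∀ γ, γ ∈ Roots W → γ ∈ X → sref W γ ∈ Q := by
    intro γ h1 h2
    rw [hQ, mem_pointwiseStabilizer_iff]
    refine ⟨sref_mem h1, fun y hy => ?_⟩
    exact (sref_isRootOf h1).2.2 y ((Submodule.mem_orthogonal X y).mp hy γ h2)
  have hsrefP : ∀ γ, γ ∈ Roots W → γ ∈ Xᗮ → sref W γ ∈ P := by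
    intro γ h1 h2
    rw [hP, mem_pointwiseStabilizer_iff]
    refine ⟨sref_mem h1, fun x hx => ?_⟩
    refine (sref_isRootOf h1).2.2 x ?_
    have hxX : x ∈ X := by
      rw [hX, mem_fixedSubmodule_iff]
      intro p hp
      rw [hP, mem_pointwiseStabilizer_iff] at hp
      exact hp.2 x hx
    rw [real_inner_comm]
    exact (Submodule.mem_orthogonal X γ).mp h2 x hxX
  -- generic points
  obtain ⟨x₀, hx₀X, hx₀gen⟩ := exists_generic X (roots_finite hWfin).toFinset
  have hx₀reg : ∀ γ, γ ∈ Roots W → γ ∈ X → ⟪γ, x₀⟫ ≠ 0 := by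
    intro γ h1 h2
    refine hx₀gen γ ((roots_finite hWfin).mem_toFinset.mpr h1) ⟨γ, h2, ?_⟩
    rw [roots_inner_self h1]; norm_num
  obtain ⟨y₀, hy₀X, hy₀gen⟩ := exists_generic Xᗮ (roots_finite hWfin).toFinset
  have hy₀reg : ∀ γ, γ ∈ Roots W → γ ∈ Xᗮ → ⟪γ, y₀⟫ ≠ 0 := by
    intro γ h1 h2
    refine hy₀gen γ ((roots_finite hWfin).mem_toFinset.mpr h1) ⟨γ, h2, ?_⟩
    rw [roots_inner_self h1]; norm_num
  -- the complement D
  let D : Subgroup (V ≃ₗᵢ[ℝ] V) :=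
    { carrier := {n | n ∈ N ∧ (∀ γ, γ ∈ Roots W → γ ∈ X → 0 < ⟪γ, n x₀⟫ * ⟪γ, x₀⟫) ∧
        (∀ γ, γ ∈ Roots W → γ ∈ Xᗮ → 0 < ⟪γ, n y₀⟫ * ⟪γ, y₀⟫)}
      one_mem' := by
        refine ⟨N.one_mem, fun γ h1 h2 => ?_, fun γ h1 h2 => ?_⟩
        · rw [one_app]; exact mul_self_pos.mpr (hx₀reg γ h1 h2)
        · rw [one_app]; exact mul_self_pos.mpr (hy₀reg γ h1 h2)
      mul_mem' := by
        rintro a b ⟨haN, haQ, haP⟩ ⟨hbN, hbQ, hbP⟩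
        refine ⟨N.mul_mem haN hbN, fun γ h1 h2 => ?_, fun γ h1 h2 => ?_⟩
        · obtain ⟨h1', h2'⟩ := hNRQ a⁻¹ (N.inv_mem haN) γ h1 h2
          have hA := hbQ (a⁻¹ γ) h1' h2'
          have hB : 0 < ⟪a⁻¹ γ, x₀⟫ * ⟪γ, x₀⟫ := by
            have h3 := haQ γ h1 h2
            rwa [show ⟪γ, a x₀⟫ = ⟪a⁻¹ γ, x₀⟫ from (inner_inv_left a γ x₀).symm] at h3
          rw [mul_app, show ⟪γ, a (b x₀)⟫ = ⟪a⁻¹ γ, b x₀⟫ from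
            (inner_inv_left a γ (b x₀)).symm]
          exact sign_trans hA hB
        · obtain ⟨h1', h2'⟩ := hNRP a⁻¹ (N.inv_mem haN) γ h1 h2
          have hA := hbP (a⁻¹ γ) h1' h2'
          have hB : 0 < ⟪a⁻¹ γ, y₀⟫ * ⟪γ, y₀⟫ := by
            have h3 := haP γ h1 h2
            rwa [show ⟪γ, a y₀⟫ = ⟪a⁻¹ γ, y₀⟫ from (inner_inv_left a γ y₀).symm] at h3
          rw [mul_app, show ⟪γ, a (b y₀)⟫ = ⟪a⁻¹ γ, b y₀⟫ from
            (inner_inv_left a γ (b y₀)).symm]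
          exact sign_trans hA hB
      inv_mem' := by
        rintro a ⟨haN, haQ, haP⟩
        refine ⟨N.inv_mem haN, fun γ h1 h2 => ?_, fun γ h1 h2 => ?_⟩
        · obtain ⟨h1', h2'⟩ := hNRQ a haN γ h1 h2
          have h3 := haQ (a γ) h1' h2'
          rw [a.inner_map_map γ x₀] at h3
          rw [show ⟪γ, a⁻¹ x₀⟫ = ⟪a γ, x₀⟫ from by
            rw [← a.inner_map_map γ (a⁻¹ x₀), apply_inv_apply]]
          rw [mul_comm]
          exact h3
        · obtain ⟨h1', h2'⟩ := hNRP a haN γ h1 h2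
          have h3 := haP (a γ) h1' h2'
          rw [a.inner_map_map γ y₀] at h3
          rw [show ⟪γ, a⁻¹ y₀⟫ = ⟪a γ, y₀⟫ from by
            rw [← a.inner_map_map γ (a⁻¹ y₀), apply_inv_apply]]
          rw [mul_comm]
          exact h3 }
  have hDmem : ∀ d : V ≃ₗᵢ[ℝ] V, d ∈ D ↔ (d ∈ N ∧
      (∀ γ, γ ∈ Roots W → γ ∈ X → 0 < ⟪γ, d x₀⟫ * ⟪γ, x₀⟫) ∧
      (∀ γ, γ ∈ Roots W → γ ∈ Xᗮ → 0 < ⟪γ, d y₀⟫ * ⟪γ, y₀⟫)) := fun d => Iff.rfl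
  -- every element of P ⊔ Q is a product
  have hsup : ∀ g ∈ P ⊔ Q, ∃ p ∈ P, ∃ q ∈ Q, g = p * q := by
    have hK : P ⊔ Q ≤ {
        carrier := {g | ∃ p ∈ P, ∃ q ∈ Q, g = p * q}
        one_mem' := ⟨1, P.one_mem, 1, Q.one_mem, (one_mul 1).symm⟩
        mul_mem' := by
          rintro a b ⟨p₁, hp₁, q₁, hq₁, rfl⟩ ⟨p₂, hp₂, q₂, hq₂, rfl⟩
          refine ⟨p₁ * p₂, P.mul_mem hp₁ hp₂, q₁ * q₂, Q.mul_mem hq₁ hq₂, ?_⟩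
          rw [show p₁ * p₂ * (q₁ * q₂) = p₁ * (p₂ * q₁) * q₂ from by group,
            hcomm p₂ hp₂ q₁ hq₁]
          group
        inv_mem' := by
          rintro a ⟨p₁, hp₁, q₁, hq₁, rfl⟩
          refine ⟨p₁⁻¹, P.inv_mem hp₁, q₁⁻¹, Q.inv_mem hq₁, ?_⟩
          rw [mul_inv_rev, hcomm p₁⁻¹ (P.inv_mem hp₁) q₁⁻¹ (Q.inv_mem hq₁)] } := by
      refine sup_le (fun p hp => ⟨p, hp, 1, Q.one_mem, (mul_one p).symm⟩)
        (fun q hq => ⟨1, P.one_mem, q, hq, (one_mul q).symm⟩)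
    exact fun g hg => hK hg
  refine ⟨⟨hQN, hNQ⟩, hPQbot, hcomm, D, fun d hd => ((hDmem d).mp hd).1, ?_, ?_⟩
  · -- (P ⊔ Q) ⊓ D = ⊥
    refine le_antisymm (fun g hg => ?_) bot_le
    rw [Subgroup.mem_inf] at hg
    obtain ⟨hgPQ, hgD⟩ := hg
    obtain ⟨p, hp, q, hq, rfl⟩ := hsup _ hgPQ
    obtain ⟨hgN, hgQc, hgPc⟩ := (hDmem _).mp hgD
    have hq1 : q = 1 := by
      refine kill_aux hWfin hWgen Xᗮ (hQW hq) (fun u hu => hQXp q hq u hu) x₀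
        (fun γ h1 h2 => hx₀reg γ h1 (hXdd ▸ h2))
        (fun γ h1 h2 => ?_) (fun γ h1 h2 => ?_)
      · obtain ⟨h1', h2'⟩ := hNRQ q⁻¹ (N.inv_mem (hQN hq)) γ h1 (hXdd ▸ h2)
        exact ⟨h1', by rw [hXdd]; exact h2'⟩
      · have h3 := hgQc γ h1 (hXdd ▸ h2)
        have h4 : (p * q) x₀ = q x₀ := by
          rw [mul_app, hPX p hp (q x₀) (hQX q hq x₀ hx₀X)]
        rwa [h4] at h3
    have hp1 : p = 1 := by
      refine kill_aux hWfin hWgen X (hPW hp) (fun u hu => hPX p hp u hu) y₀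
        (fun γ h1 h2 => hy₀reg γ h1 h2)
        (fun γ h1 h2 => hNRP p⁻¹ (N.inv_mem (hPN hp)) γ h1 h2)
        (fun γ h1 h2 => ?_)
      have h3 := hgPc γ h1 h2
      have h4 : (p * q) y₀ = p y₀ := by
        rw [mul_app, hQXp q hq y₀ hy₀X]
      rwa [h4] at h3
    rw [hq1, hp1, one_mul]
    exact Subgroup.one_mem ⊥
  · -- factorization
    intro n hn
    obtain ⟨p, hp, hpmax⟩ := exists_max_shift hWfin P hPW (n y₀) y₀
    obtain ⟨q, hq, hqmax⟩ := exists_max_shift hWfin Q hQW ((p * n) x₀) x₀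
    have hpnN : p * n ∈ N := N.mul_mem (hPN hp) hn
    have hdN : q * (p * n) ∈ N := N.mul_mem (hQN hq) hpnN
    have hQcond : ∀ γ, γ ∈ Roots W → γ ∈ X → 0 < ⟪γ, (q * (p * n)) x₀⟫ * ⟪γ, x₀⟫ := by
      intro γ h1 h2
      have hge : 0 ≤ ⟪γ, (q * (p * n)) x₀⟫ * ⟪γ, x₀⟫ := hqmax γ h1 (hsrefQ γ h1 h2)
      have hne1 : ⟪γ, (q * (p * n)) x₀⟫ ≠ 0 := by
        rw [show ⟪γ, (q * (p * n)) x₀⟫ = ⟪(q * (p * n))⁻¹ γ, x₀⟫ from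
          (inner_inv_left _ γ x₀).symm]
        obtain ⟨h1', h2'⟩ := hNRQ (q * (p * n))⁻¹ (N.inv_mem hdN) γ h1 h2
        exact hx₀reg _ h1' h2'
      exact lt_of_le_of_ne hge (Ne.symm (mul_ne_zero hne1 (hx₀reg γ h1 h2)))
    have hfixy : (q * (p * n)) y₀ = (p * n) y₀ := by
      have h5 : (p * n) y₀ ∈ Xᗮ := hNXp (p * n) hpnN y₀ hy₀X
      exact hQXp q hq _ h5
    have hPcond : ∀ γ, γ ∈ Roots W → γ ∈ Xᗮ → 0 < ⟪γ, (q * (p * n)) y₀⟫ * ⟪γ, y₀⟫ := by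
      intro γ h1 h2
      rw [hfixy]
      have hge : 0 ≤ ⟪γ, (p * n) y₀⟫ * ⟪γ, y₀⟫ := hpmax γ h1 (hsrefP γ h1 h2)
      have hne1 : ⟪γ, (p * n) y₀⟫ ≠ 0 := by
        rw [show ⟪γ, (p * n) y₀⟫ = ⟪(p * n)⁻¹ γ, y₀⟫ from (inner_inv_left _ γ y₀).symm]
        obtain ⟨h1', h2'⟩ := hNRP (p * n)⁻¹ (N.inv_mem hpnN) γ h1 h2
        exact hy₀reg _ h1' h2'
      exact lt_of_le_of_ne hge (Ne.symm (mul_ne_zero hne1 (hy₀reg γ h1 h2)))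
    refine ⟨p⁻¹ * q⁻¹, Subgroup.mul_mem _ (Subgroup.mem_sup_left (P.inv_mem hp))
      (Subgroup.mem_sup_right (Q.inv_mem hq)), q * (p * n),
      (hDmem _).mpr ⟨hdN, hQcond, hPcond⟩, by group⟩
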